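/- If G is a connected graph and S is a safe set of G with |S| = k, then every vertex of degree at least 2k belongs to S. -/
import Mathlib


variable {V : Type*}

/-- Two vertex sets are adjacent if some edge joins them. -/
def SetsAdj (G : SimpleGraph V) (A B : Set V) : Prop :=
  ∃ a ∈ A, ∃ b ∈ B, G.Adj a b

/-- `u` and `v` are connected inside the induced subgraph `G[S]`. -/
def ReachIn (G : SimpleGraph V) (S : Set V) (u v : V) : Prop :=
  ∃ (hu : u ∈ S) (hv : v ∈ S), (G.induce S).Reachable ⟨u, hu⟩ ⟨v, hv⟩

/-- `C` is (the vertex set of) a connected component of the induced subgraph `G[S]`. -/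
def IsCompOf (G : SimpleGraph V) (S C : Set V) : Prop :=
  ∃ v ∈ S, C = {u | ReachIn G S u v}

/-- A safe set: nonempty, and no component of `G[S]` is adjacent to a larger
component of `G - S`. -/
def IsSafeSet (G : SimpleGraph V) (S : Set V) : Prop :=
  S.Nonempty ∧ ∀ C D : Set V, IsCompOf G S C → IsCompOf G Sᶜ D →
    SetsAdj G C D → D.ncard ≤ C.ncard

/-- A connected safe set. -/
def IsConnSafeSet (G : SimpleGraph V) (S : Set V) : Prop :=
  IsSafeSet G S ∧ (G.induce S).Connected

/-- The safe number: minimum size of a safe set. -/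
noncomputable def sNum (G : SimpleGraph V) : ℕ :=
  sInf {n | ∃ S : Set V, IsSafeSet G S ∧ S.ncard = n}

/-- The connected safe number: minimum size of a connected safe set. -/
noncomputable def csNum (G : SimpleGraph V) : ℕ :=
  sInf {n | ∃ S : Set V, IsConnSafeSet G S ∧ S.ncard = n}

private lemma boundary {G : SimpleGraph V} {S : Set V} {v : V} :
    ∀ {u s : V}, G.Walk u s → ReachIn G Sᶜ u v → s ∈ S →
      ∃ a, ReachIn G Sᶜ a v ∧ ∃ b ∈ S, G.Adj a b := by
  intro u s w
  induction w with
  | nil =>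
    intro hu hs
    exact absurd hs hu.1
  | @cons u x s h p ih =>
    intro hu hs
    by_cases hx : x ∈ S
    · exact ⟨u, hu, x, hx, h⟩
    · refine ih ?_ hs
      obtain ⟨hu1, hv1, hr⟩ := hu
      exact ⟨hx, hv1,
        (SimpleGraph.Adj.reachable (show (G.induce Sᶜ).Adj ⟨x, hx⟩ ⟨u, hu1⟩ from h.symm)).trans hr⟩

theorem stmt4 [Fintype V] (G : SimpleGraph V) [DecidableRel G.Adj]
    (hG : G.Connected) (S : Set V) (k : ℕ) (hS : IsSafeSet G S) (hk : S.ncard = k)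
    (v : V) (hv : 2 * k ≤ G.degree v) : v ∈ S := by
  by_contra hvS
  have hvS' : v ∈ Sᶜ := hvS
  set D : Set V := {u | ReachIn G Sᶜ u v} with hD
  have hvD : v ∈ D := ⟨hvS', hvS', SimpleGraph.Reachable.refl _⟩
  set N : Set V := G.neighborSet v \ S with hN
  have hNsub : N ⊆ D := by
    rintro u ⟨hadj, huS⟩
    exact ⟨huS, hvS',
      SimpleGraph.Adj.reachable (show (G.induce Sᶜ).Adj ⟨u, huS⟩ ⟨v, hvS'⟩ from
        (G.adj_symm hadj))⟩
  have hins : insert v N ⊆ D := Set.insert_subset hvD hNsub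
  have hvN : v ∉ N := fun h => G.irrefl h.1
  have hdeg : (G.neighborSet v).ncard = G.degree v := by
    rw [Set.ncard_eq_toFinset_card']
    simp [SimpleGraph.degree, SimpleGraph.neighborFinset_def]
  have hsplit : (G.neighborSet v).ncard ≤ N.ncard + (G.neighborSet v ∩ S).ncard := by
    calc (G.neighborSet v).ncard = (N ∪ (G.neighborSet v ∩ S)).ncard := by
          rw [hN, Set.diff_union_inter]
      _ ≤ N.ncard + (G.neighborSet v ∩ S).ncard := Set.ncard_union_le _ _
  have hcap : (G.neighborSet v ∩ S).ncard ≤ k := by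
    rw [← hk]
    exact Set.ncard_le_ncard Set.inter_subset_right S.toFinite
  have hNk : k ≤ N.ncard := by omega
  have hDk : k + 1 ≤ D.ncard := by
    have h1 : (insert v N).ncard = N.ncard + 1 := Set.ncard_insert_of_notMem hvN N.toFinite
    have h2 : (insert v N).ncard ≤ D.ncard := Set.ncard_le_ncard hins D.toFinite
    omega
  obtain ⟨s, hs⟩ := hS.1
  obtain ⟨w⟩ := hG.preconnected v s
  obtain ⟨a, haD, b, hbS, hab⟩ :=
    boundary w (⟨hvS', hvS', SimpleGraph.Reachable.refl _⟩ : ReachIn G Sᶜ v v) hs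
  set C : Set V := {u | ReachIn G S u b} with hC
  have hCcomp : IsCompOf G S C := ⟨b, hbS, rfl⟩
  have hDcomp : IsCompOf G Sᶜ D := ⟨v, hvS', rfl⟩
  have hadjCD : SetsAdj G C D :=
    ⟨b, ⟨hbS, hbS, SimpleGraph.Reachable.refl _⟩, a, haD, hab.symm⟩
  have hle := hS.2 C D hCcomp hDcomp hadjCD
  have hCS : C ⊆ S := fun u hu => hu.1
  have hCk : C.ncard ≤ k := hk ▸ Set.ncard_le_ncard hCS S.toFinite
  omega
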